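/- Let X ∈ ℝ^{n×p} with XᵀX invertible, y ∈ ℝ^n; for i = 1,…,N let Δ_i ∈ ℝ^p, θ_i^{(1)} ∈ ℝ^p, g_i = 2XᵀX(θ_i^{(1)} − Δ_i) − 2Xᵀy, and y_i' = −Xθ_i^{(1)} + y + XΔ_i. Define l^total(B) = (1/N)Σ_{i=1}^N ‖XBg_i + y_i'‖² and l* = ‖X(XᵀX)⁻¹Xᵀy − y‖². Then l^total(B) ≥ l* for every B ∈ ℝ^{p×p}; consequently B* = (1/2)(XᵀX)⁻¹ is a global minimizer of l^total. -/
import Mathlib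


open Finset Matrix

lemma sq_sum_ge_aux {n p : ℕ} (X : Matrix (Fin n) (Fin p) ℝ) (hX : IsUnit (Xᵀ * X))
    (y : Fin n → ℝ) (u : Fin p → ℝ) :
    ∑ j, ((X *ᵥ ((Xᵀ * X)⁻¹ *ᵥ (Xᵀ *ᵥ y)) - y) j) ^ 2 ≤ ∑ j, ((X *ᵥ u - y) j) ^ 2 := by
  set A := Xᵀ * X with hA
  set w : Fin p → ℝ := A⁻¹ *ᵥ (Xᵀ *ᵥ y) with hw
  have hdet : IsUnit A.det := (Matrix.isUnit_iff_isUnit_det A).mp hX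
  have hAw : A *ᵥ w = Xᵀ *ᵥ y := by
    rw [hw, Matrix.mulVec_mulVec, Matrix.mul_nonsing_inv A hdet, Matrix.one_mulVec]
  set a : Fin n → ℝ := X *ᵥ w - y with ha
  set b : Fin n → ℝ := X *ᵥ (u - w) with hb
  have hXa : Xᵀ *ᵥ a = 0 := by
    rw [ha, Matrix.mulVec_sub, Matrix.mulVec_mulVec, ← hA, hAw, sub_self]
  have hcross : a ⬝ᵥ b = 0 := by
    rw [hb, Matrix.dotProduct_mulVec, ← Matrix.mulVec_transpose, hXa,
      zero_dotProduct]
  have hsum : X *ᵥ u - y = a + b := by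
    rw [ha, hb, Matrix.mulVec_sub]
    abel
  rw [hsum]
  have hexp : ∑ j, ((a + b) j) ^ 2 = ∑ j, (a j) ^ 2 + ∑ j, (b j) ^ 2 + 2 * (a ⬝ᵥ b) := by
    simp only [dotProduct, Finset.mul_sum, ← Finset.sum_add_distrib, Pi.add_apply]
    apply Finset.sum_congr rfl
    intros; ring
  rw [hexp, hcross]
  have : 0 ≤ ∑ j, (b j) ^ 2 := Finset.sum_nonneg fun j _ => sq_nonneg _
  linarith

theorem ltotal_ge_lstar_and_Bstar_min {n p N : ℕ} (hN : 0 < N)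
    (X : Matrix (Fin n) (Fin p) ℝ) (hX : IsUnit (Xᵀ * X)) (y : Fin n → ℝ)
    (Δ θ₁ : Fin N → Fin p → ℝ)
    (g : Fin N → Fin p → ℝ)
    (hg : ∀ i, g i = (2 : ℝ) • ((Xᵀ * X) *ᵥ (θ₁ i - Δ i)) - (2 : ℝ) • (Xᵀ *ᵥ y))
    (y' : Fin N → Fin n → ℝ)
    (hy' : ∀ i, y' i = -(X *ᵥ θ₁ i) + y + X *ᵥ Δ i)
    (ltotal : Matrix (Fin p) (Fin p) ℝ → ℝ)
    (hltotal : ∀ B, ltotal B = (1 / (N : ℝ)) * ∑ i, ∑ j, ((X *ᵥ (B *ᵥ g i) + y' i) j) ^ 2)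
    (lstar : ℝ)
    (hlstar : lstar = ∑ j, ((X *ᵥ ((Xᵀ * X)⁻¹ *ᵥ (Xᵀ *ᵥ y)) - y) j) ^ 2)
    (Bstar : Matrix (Fin p) (Fin p) ℝ) (hBstar : Bstar = ((1 : ℝ) / 2) • (Xᵀ * X)⁻¹) :
    (∀ B, lstar ≤ ltotal B) ∧ (∀ B, ltotal Bstar ≤ ltotal B) := by
  have hNpos : (0 : ℝ) < (N : ℝ) := by exact_mod_cast hN
  have key : ∀ u : Fin p → ℝ, lstar ≤ ∑ j, ((X *ᵥ u - y) j) ^ 2 := by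
    intro u; rw [hlstar]; exact sq_sum_ge_aux X hX y u
  have hterm : ∀ (B : Matrix (Fin p) (Fin p) ℝ) (i : Fin N),
      ∑ j, ((X *ᵥ (B *ᵥ g i) + y' i) j) ^ 2
        = ∑ j, ((X *ᵥ (θ₁ i - Δ i - B *ᵥ g i) - y) j) ^ 2 := by
    intro B i
    apply Finset.sum_congr rfl
    intro j _
    have h1 : (X *ᵥ (B *ᵥ g i) + y' i) j = -((X *ᵥ (θ₁ i - Δ i - B *ᵥ g i) - y) j) := by
      rw [hy' i]
      simp [Matrix.mulVec_sub, Pi.add_apply, Pi.sub_apply, Pi.neg_apply]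
      ring
    rw [h1]; ring
  have hge : ∀ B, lstar ≤ ltotal B := by
    intro B
    rw [hltotal]
    rw [one_div, inv_mul_eq_div, le_div_iff₀ hNpos, mul_comm]
    calc (N : ℝ) * lstar = ∑ _i : Fin N, lstar := by
          rw [Finset.sum_const, Finset.card_univ, Fintype.card_fin, nsmul_eq_mul]
      _ ≤ _ := Finset.sum_le_sum fun i _ => by rw [hterm]; exact key _
  refine ⟨hge, ?_⟩
  -- show ltotal Bstar = lstar
  set A := Xᵀ * X with hA
  have hdet : IsUnit A.det := (Matrix.isUnit_iff_isUnit_det A).mp hX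
  set w : Fin p → ℝ := A⁻¹ *ᵥ (Xᵀ *ᵥ y) with hw
  have hBg : ∀ i, θ₁ i - Δ i - Bstar *ᵥ g i = w := by
    intro i
    rw [hBstar, hg i, Matrix.smul_mulVec, Matrix.mulVec_sub,
      Matrix.mulVec_smul, Matrix.mulVec_smul, Matrix.mulVec_mulVec,
      Matrix.nonsing_inv_mul A hdet, Matrix.one_mulVec]
    funext j
    simp [hw, Pi.sub_apply, Pi.smul_apply, smul_eq_mul]
    ring
  have heq : ltotal Bstar = lstar := by
    rw [hltotal]
    have : ∀ i : Fin N, ∑ j, ((X *ᵥ (Bstar *ᵥ g i) + y' i) j) ^ 2 = lstar := by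
      intro i
      rw [hterm, hBg i, hlstar]
    rw [Finset.sum_congr rfl fun i _ => this i, Finset.sum_const, Finset.card_univ,
      Fintype.card_fin, nsmul_eq_mul]
    field_simp
  intro B
  rw [heq]
  exact hge B
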